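/- If φ is a conditional density of X₁ given (X₂,…,X_d) and u₁ ≠ 0, then almost every t ∈ ℝ (with respect to the law of Z = Σ_j u_j X_j) satisfies E[X₁ | Z = t] = E[u₁⁻¹(t − Σ_{i=2}^d u_i X_i) · φ(u₁⁻¹(t − Σ_{j=2}^d u_j X_j), X₂,…,X_d)] / E[φ(u₁⁻¹(t − Σ_{j=2}^d u_j X_j), X₂,…,X_d)]. -/

import Mathlib

open MeasureTheory
open scoped ENNReal NNReal

/-- `φ : ℝ → (Fin m → ℝ) → ℝ` is a conditional density of `X₁` given the vector `Y`:
for all Borel `A ⊆ ℝ`, `B ⊆ ℝ^m`,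
`P(X₁ ∈ A, Y ∈ B) = E[1_{Y ∈ B} ∫_A φ(t, Y) dt]`. -/
def IsCondDensity {Ω : Type*} [MeasurableSpace Ω] (μ : Measure Ω)
    {m : ℕ} (X1 : Ω → ℝ) (Y : Ω → (Fin m → ℝ)) (φ : ℝ → (Fin m → ℝ) → ℝ) : Prop :=
  Measurable (Function.uncurry φ) ∧ (∀ t x, 0 ≤ φ t x) ∧
    ∀ A : Set ℝ, MeasurableSet A → ∀ B : Set (Fin m → ℝ), MeasurableSet B →
      (μ {ω | X1 ω ∈ A ∧ Y ω ∈ B}).toReal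
        = ∫ ω in {ω | Y ω ∈ B}, ∫ t in A, φ t (Y ω) ∂(volume) ∂μ


namespace Stmt7Aux
open Function

variable {Ω : Type*} [MeasurableSpace Ω] {μ : Measure Ω} [IsProbabilityMeasure μ] {m : ℕ}
  {X1 : Ω → ℝ} {Y : Ω → Fin m → ℝ} {φ : ℝ → (Fin m → ℝ) → ℝ}

lemma sm_integral (hmeas : Measurable (uncurry φ)) (A : Set ℝ) :
    StronglyMeasurable fun y : Fin m → ℝ => ∫ t in A, φ t y ∂volume := by
  have h1 : StronglyMeasurable (uncurry fun (y : Fin m → ℝ) (t : ℝ) => φ t y) :=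
    (hmeas.comp measurable_swap).stronglyMeasurable
  exact h1.integral_prod_right'

lemma setIntegral_key (hX1 : Measurable X1) (hY : Measurable Y)
    (hφ : IsCondDensity μ X1 Y φ) {A : Set ℝ} (hA : MeasurableSet A)
    {B : Set (Fin m → ℝ)} (hB : MeasurableSet B) :
    (μ {ω | X1 ω ∈ A ∧ Y ω ∈ B}).toReal
      = ∫ y in B, (∫ t in A, φ t y ∂volume) ∂(μ.map Y) := by
  obtain ⟨hmeas, hpos, hint⟩ := hφ
  rw [hint A hA B hB,
    setIntegral_map hB (sm_integral hmeas A).aestronglyMeasurable hY.aemeasurable]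
  rfl

lemma ae_density_one (hX1 : Measurable X1) (hY : Measurable Y)
    (hφ : IsCondDensity μ X1 Y φ) :
    ∀ᵐ y ∂(μ.map Y), Integrable (fun t => φ t y) volume ∧
      ∫⁻ t, ENNReal.ofReal (φ t y) ∂volume = 1 := by
  have hν : IsProbabilityMeasure (μ.map Y) := Measure.isProbabilityMeasure_map hY.aemeasurable
  have hmeas := hφ.1
  have hpos := hφ.2.1
  set ν := μ.map Y with hνdef
  set f : (Fin m → ℝ) → ℝ := fun y => ∫ t, φ t y ∂volume with hfdef
  have key : ∀ B : Set (Fin m → ℝ), MeasurableSet B → ∫ y in B, f y ∂ν = (ν B).toReal := by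
    intro B hB
    have h := (setIntegral_key hX1 hY hφ MeasurableSet.univ hB).symm
    simp only [Set.mem_univ, true_and, Measure.restrict_univ] at h
    rw [h]
    rw [hνdef, Measure.map_apply hY hB]
    rfl
  have hfint : Integrable f ν := by
    by_contra h
    have h0 := integral_undef h
    have h1 := key Set.univ MeasurableSet.univ
    rw [Measure.restrict_univ, h0, measure_univ] at h1
    norm_num at h1
  have hfone : f =ᵐ[ν] fun _ => (1 : ℝ) := by
    apply ae_eq_of_forall_setIntegral_eq_of_sigmaFinite
    · intro s hs _; exact hfint.integrableOn
    · intro s hs _; exact (integrable_const 1).integrableOn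
    · intro s hs _
      rw [key s hs, setIntegral_const]
      simp
      rfl
  filter_upwards [hfone] with y hy
  have hyint : Integrable (fun t => φ t y) volume := by
    by_contra h
    have h0 := integral_undef h
    change f y = 0 at h0
    rw [hy] at h0
    norm_num at h0
  refine ⟨hyint, ?_⟩
  rw [← ofReal_integral_eq_lintegral_ofReal hyint (Filter.Eventually.of_forall fun t => hpos t y)]
  change ENNReal.ofReal (f y) = 1
  rw [hy]
  norm_num

end Stmt7Aux

namespace Stmt7Aux2
open Function Stmt7Aux
variable {Ω : Type*} [MeasurableSpace Ω] {μ : Measure Ω} [IsProbabilityMeasure μ] {m : ℕ}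
  {X1 : Ω → ℝ} {Y : Ω → Fin m → ℝ} {φ : ℝ → (Fin m → ℝ) → ℝ}

lemma law_eq (hX1 : Measurable X1) (hY : Measurable Y) (hφ : IsCondDensity μ X1 Y φ) :
    μ.map (fun ω => (X1 ω, Y ω))
      = ((volume : Measure ℝ).prod (μ.map Y)).withDensity
          (fun p => ENNReal.ofReal (φ p.1 p.2)) := by
  have hmeas := hφ.1
  have hpos := hφ.2.1
  have hν : IsProbabilityMeasure (μ.map Y) := Measure.isProbabilityMeasure_map hY.aemeasurable
  set ν := μ.map Y with hνdef
  have hΦ : Measurable fun p : ℝ × (Fin m → ℝ) => ENNReal.ofReal (φ p.1 p.2) :=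
    ENNReal.measurable_ofReal.comp hmeas
  have hone := ae_density_one hX1 hY hφ
  -- rectangle formula for the density measure
  have hrect : ∀ (A : Set ℝ), MeasurableSet A → ∀ (B : Set (Fin m → ℝ)), MeasurableSet B →
      (((volume : Measure ℝ).prod ν).withDensity (fun p => ENNReal.ofReal (φ p.1 p.2)))
        (A ×ˢ B) = ∫⁻ y in B, ∫⁻ t in A, ENNReal.ofReal (φ t y) ∂volume ∂ν := by
    intro A hA B hB
    rw [withDensity_apply _ (hA.prod hB), ← Measure.prod_restrict,
      lintegral_prod_symm _ (hΦ.aemeasurable)]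
  -- inner lintegral is bounded by 1 a.e.
  have hbound : ∀ (A : Set ℝ), ∀ᵐ y ∂ν, ∫⁻ t in A, ENNReal.ofReal (φ t y) ∂volume ≤ 1 := by
    intro A
    filter_upwards [hone] with y hy
    calc ∫⁻ t in A, ENNReal.ofReal (φ t y) ∂volume
        ≤ ∫⁻ t, ENNReal.ofReal (φ t y) ∂volume := setLIntegral_le_lintegral _ _
      _ = 1 := hy.2
  have hrect_le : ∀ (A : Set ℝ), MeasurableSet A → ∀ (B : Set (Fin m → ℝ)), MeasurableSet B →
      ∫⁻ y in B, ∫⁻ t in A, ENNReal.ofReal (φ t y) ∂volume ∂ν ≤ 1 := by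
    intro A hA B hB
    calc ∫⁻ y in B, ∫⁻ t in A, ENNReal.ofReal (φ t y) ∂volume ∂ν
        ≤ ∫⁻ y in B, 1 ∂ν := lintegral_mono_ae (ae_restrict_of_ae (hbound A))
      _ = ν B := by simp
      _ ≤ 1 := prob_le_one
  -- measurability of the inner lintegral
  have hinner_meas : ∀ (A : Set ℝ), MeasurableSet A →
      Measurable fun y => ∫⁻ t in A, ENNReal.ofReal (φ t y) ∂volume := by
    intro A hA
    have : Measurable fun p : (Fin m → ℝ) × ℝ =>
        (Set.univ ×ˢ A).indicator (fun q : (Fin m → ℝ) × ℝ => ENNReal.ofReal (φ q.2 q.1)) p :=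
      ((ENNReal.measurable_ofReal.comp (hmeas.comp measurable_swap)).indicator
        (MeasurableSet.univ.prod hA))
    have h2 := Measurable.lintegral_prod_right' (ν := (volume : Measure ℝ)) this
    have hfun : (fun y : Fin m → ℝ => ∫⁻ t in A, ENNReal.ofReal (φ t y) ∂volume)
        = fun y => ∫⁻ t, (Set.univ ×ˢ A).indicator
            (fun q : (Fin m → ℝ) × ℝ => ENNReal.ofReal (φ q.2 q.1)) (y, t) ∂volume := by
      funext y
      rw [← lintegral_indicator hA]
      congr 1
      ext t
      by_cases ht : t ∈ A <;> simp [Set.indicator, ht]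
    rw [hfun]
    exact h2
  -- toReal of rectangle equals the set-integral
  have htoReal : ∀ (A : Set ℝ), MeasurableSet A → ∀ (B : Set (Fin m → ℝ)), MeasurableSet B →
      (∫⁻ y in B, ∫⁻ t in A, ENNReal.ofReal (φ t y) ∂volume ∂ν).toReal
        = ∫ y in B, (∫ t in A, φ t y ∂volume) ∂ν := by
    intro A hA B hB
    rw [← integral_toReal ((hinner_meas A hA).aemeasurable.restrict)
      (ae_restrict_of_ae ((hbound A).mono fun y hy => lt_of_le_of_lt hy ENNReal.one_lt_top))]
    apply setIntegral_congr_ae hB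
    filter_upwards [hone] with y hy _
    rw [← ofReal_integral_eq_lintegral_ofReal (hy.1.integrableOn)
      (Filter.Eventually.of_forall fun t => hpos t y),
      ENNReal.toReal_ofReal (integral_nonneg fun t => hpos t y)]
  -- rectangles agree
  have hAB : ∀ (A : Set ℝ), MeasurableSet A → ∀ (B : Set (Fin m → ℝ)), MeasurableSet B →
      (μ.map fun ω => (X1 ω, Y ω)) (A ×ˢ B)
        = (((volume : Measure ℝ).prod ν).withDensity
            (fun p => ENNReal.ofReal (φ p.1 p.2))) (A ×ˢ B) := by
    intro A hA B hB
    rw [Measure.map_apply (hX1.prodMk hY) (hA.prod hB), Set.mk_preimage_prod, hrect A hA B hB]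
    have h1 : X1 ⁻¹' A ∩ Y ⁻¹' B = {ω | X1 ω ∈ A ∧ Y ω ∈ B} := rfl
    rw [h1]
    refine ENNReal.toReal_eq_toReal_iff' (measure_ne_top μ _) ?_ |>.mp ?_
    · exact ne_top_of_le_ne_top ENNReal.one_ne_top (hrect_le A hA B hB)
    · rw [htoReal A hA B hB, setIntegral_key hX1 hY hφ hA hB]
  -- conclude by π-system argument
  refine ext_of_generate_finite _ generateFrom_prod.symm isPiSystem_prod ?_ ?_
  · rintro s ⟨A, hA, B, hB, rfl⟩
    exact hAB A hA B hB
  · rw [← Set.univ_prod_univ]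
    exact hAB _ MeasurableSet.univ _ MeasurableSet.univ

end Stmt7Aux2

namespace Stmt7Aux3
open Function Stmt7Aux Stmt7Aux2 ENNReal
variable {Ω : Type*} [MeasurableSpace Ω] {μ : Measure Ω} [IsProbabilityMeasure μ] {m : ℕ}
  {X1 : Ω → ℝ} {Y : Ω → Fin m → ℝ} {φ : ℝ → (Fin m → ℝ) → ℝ}

lemma master (hX1 : Measurable X1) (hY : Measurable Y) (hφ : IsCondDensity μ X1 Y φ)
    {u1 : ℝ} (hu1 : u1 ≠ 0) (u : Fin m → ℝ)
    (ψ : ℝ → (Fin m → ℝ) → ℝ≥0∞)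
    (hψ : Measurable fun p : ℝ × (Fin m → ℝ) => ψ p.1 p.2) :
    ∫⁻ ω, ψ (X1 ω) (Y ω) ∂μ
      = ENNReal.ofReal |u1|⁻¹
        * ∫⁻ t, ∫⁻ y, ψ (u1⁻¹ * (t - ∑ i, u i * y i)) y
            * ENNReal.ofReal (φ (u1⁻¹ * (t - ∑ i, u i * y i)) y) ∂(μ.map Y) ∂volume := by
  have hmeas := hφ.1
  have hν : IsProbabilityMeasure (μ.map Y) := Measure.isProbabilityMeasure_map hY.aemeasurable
  set ν := μ.map Y with hνdef
  set c : (Fin m → ℝ) → ℝ := fun y => ∑ i, u i * y i with hcdef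
  have hc : Measurable c := by
    unfold c
    exact Finset.measurable_sum Finset.univ
      (fun i _ => (by fun_prop : Measurable fun y : Fin m → ℝ => u i * y i))
  have hΦ : Measurable fun p : ℝ × (Fin m → ℝ) => ENNReal.ofReal (φ p.1 p.2) :=
    ENNReal.measurable_ofReal.comp hmeas
  -- the integrand after substitution, as a function on (Fin m → ℝ) × ℝ (y first, t second)
  set F : (Fin m → ℝ) → ℝ → ℝ≥0∞ := fun y t =>
    ENNReal.ofReal (φ (u1⁻¹ * (t - c y)) y) * ψ (u1⁻¹ * (t - c y)) y with hFdef
  have hσ : Measurable fun q : (Fin m → ℝ) × ℝ => (u1⁻¹ * (q.2 - c q.1), q.1) := by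
    exact ((measurable_snd.sub (hc.comp measurable_fst)).const_mul u1⁻¹).prodMk measurable_fst
  have hF : Measurable (uncurry F) := by
    exact ((hΦ.comp hσ).mul (hψ.comp hσ))
  have habs : ENNReal.ofReal |u1⁻¹| = ENNReal.ofReal |u1|⁻¹ := by rw [abs_inv]
  calc ∫⁻ ω, ψ (X1 ω) (Y ω) ∂μ
      = ∫⁻ p : ℝ × (Fin m → ℝ), ψ p.1 p.2 ∂(μ.map fun ω => (X1 ω, Y ω)) :=
        (lintegral_map hψ (hX1.prodMk hY)).symm
    _ = ∫⁻ p : ℝ × (Fin m → ℝ), ENNReal.ofReal (φ p.1 p.2) * ψ p.1 p.2 ∂(volume.prod ν) := by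
        rw [law_eq hX1 hY hφ, lintegral_withDensity_eq_lintegral_mul _ hΦ hψ]
        rfl
    _ = ∫⁻ y, ∫⁻ s, ENNReal.ofReal (φ s y) * ψ s y ∂volume ∂ν :=
        lintegral_prod_symm _ (hΦ.mul hψ).aemeasurable
    _ = ∫⁻ y, ENNReal.ofReal |u1|⁻¹ * ∫⁻ t, F y t ∂volume ∂ν := by
        refine lintegral_congr fun y => ?_
        have hH : Measurable (F y) := hF.comp (measurable_prodMk_left)
        have step1 : ∫⁻ s, ENNReal.ofReal (φ s y) * ψ s y ∂volume
            = ∫⁻ s, F y (u1 * s + c y) ∂volume := by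
          refine lintegral_congr fun s => ?_
          have : u1⁻¹ * (u1 * s + c y - c y) = s := by field_simp; ring
          rw [hFdef]; simp only [this]
        have hmap : Measure.map (fun s => u1 * s + c y) volume
            = ENNReal.ofReal |u1⁻¹| • volume := by
          have h1 : (fun s : ℝ => u1 * s + c y) = (fun x => x + c y) ∘ (fun s => u1 * s) := rfl
          rw [h1, ← Measure.map_map (measurable_add_const (c y)) (measurable_const_mul u1),
            Real.map_volume_mul_left hu1, Measure.map_smul, map_add_right_eq_self volume (c y)]
        have step2 : ∫⁻ s, F y (u1 * s + c y) ∂volume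
            = ENNReal.ofReal |u1⁻¹| * ∫⁻ t, F y t ∂volume := by
          rw [← lintegral_map hH ((measurable_const_mul u1).add_const (c y)), hmap,
            lintegral_smul_measure, smul_eq_mul]
        rw [step1, step2, habs]
    _ = ENNReal.ofReal |u1|⁻¹ * ∫⁻ y, ∫⁻ t, F y t ∂volume ∂ν := by
        exact lintegral_const_mul _ hF.lintegral_prod_right'
    _ = ENNReal.ofReal |u1|⁻¹ * ∫⁻ t, ∫⁻ y, F y t ∂ν ∂volume := by
        rw [lintegral_lintegral_swap hF.aemeasurable]
    _ = _ := by
        congr 1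
        refine lintegral_congr fun t => lintegral_congr fun y => ?_
        rw [hFdef, mul_comm]

end Stmt7Aux3
/-- If `φ` is a conditional density of `X₁` given `(X₂,…,X_d)`, the vector is integrable and
`u₁ ≠ 0`, then for a.e. `t` w.r.t. the law of `Z = Σ_j u_j X_j`, `E[X₁ | Z = t]` equals
`E[u₁⁻¹(t - Σ_{i≥2} u_i X_i) φ(u₁⁻¹(t - Σ_{j≥2} u_j X_j), X₂,…,X_d)] / E[φ(…)]`. -/
theorem stmt7 {Ω : Type*} [MeasurableSpace Ω] (μ : Measure Ω) [IsProbabilityMeasure μ]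
    (m : ℕ) (hm : 1 ≤ m)
    (X1 : Ω → ℝ) (Y : Ω → (Fin m → ℝ)) (hX1 : Measurable X1) (hY : Measurable Y)
    (hX1int : Integrable X1 μ) (hYint : ∀ i, Integrable (fun ω => Y ω i) μ)
    (φ : ℝ → (Fin m → ℝ) → ℝ) (hφ : IsCondDensity μ X1 Y φ)
    (u1 : ℝ) (hu1 : u1 ≠ 0) (u : Fin m → ℝ)
    (Z : Ω → ℝ) (hZ : Z = fun ω => u1 * X1 ω + ∑ i, u i * Y ω i)
    (g : ℝ → ℝ) (hg : Measurable g)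
    (hfact : (fun ω => g (Z ω)) =ᵐ[μ] μ[X1 | MeasurableSpace.comap Z (borel ℝ)]) :
    ∀ᵐ t ∂(μ.map Z),
      g t = (∫ ω, (u1⁻¹ * (t - ∑ j, u j * Y ω j))
                * φ (u1⁻¹ * (t - ∑ j, u j * Y ω j)) (Y ω) ∂μ)
              / (∫ ω, φ (u1⁻¹ * (t - ∑ j, u j * Y ω j)) (Y ω) ∂μ) := by
  classical
  have hφmeas := hφ.1
  have hφpos := hφ.2.1
  have hν : IsProbabilityMeasure (μ.map Y) := Measure.isProbabilityMeasure_map hY.aemeasurable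
  set ν := μ.map Y with hνdef
  set c : (Fin m → ℝ) → ℝ := fun y => ∑ i, u i * y i with hcdef
  have hc : Measurable c := by
    unfold c
    exact Finset.measurable_sum Finset.univ
      (fun i _ => (by fun_prop : Measurable fun y : Fin m → ℝ => u i * y i))
  set σ : ℝ → (Fin m → ℝ) → ℝ := fun t y => u1⁻¹ * (t - c y) with hσdef
  have hσm : Measurable fun p : ℝ × (Fin m → ℝ) => σ p.1 p.2 :=
    ((measurable_fst.sub (hc.comp measurable_snd)).const_mul u1⁻¹)
  have hσpair : Measurable fun p : ℝ × (Fin m → ℝ) => (σ p.1 p.2, p.2) :=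
    hσm.prodMk measurable_snd
  have hZm : Measurable Z := by
    rw [hZ]; exact (hX1.const_mul u1).add (hc.comp hY)
  have hZc : ∀ ω, Z ω = u1 * X1 ω + c (Y ω) := fun ω => by rw [hZ]
  -- the constant
  set cE : ℝ≥0∞ := ENNReal.ofReal |u1|⁻¹ with hcEdef
  have hcE0 : cE ≠ 0 := by
    rw [hcEdef]
    simp only [ne_eq, ENNReal.ofReal_eq_zero, not_le, inv_pos, abs_pos]
    exact hu1
  have hcEtop : cE ≠ ⊤ := ENNReal.ofReal_ne_top
  have hcEre : cE.toReal = |u1|⁻¹ := ENNReal.toReal_ofReal (by positivity)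
  -- lintegral-level densities
  set Dl : ℝ → ℝ≥0∞ := fun t => ∫⁻ y, ENNReal.ofReal (φ (σ t y) y) ∂ν with hDldef
  set Np : ℝ → ℝ≥0∞ := fun t => ∫⁻ y, ENNReal.ofReal (σ t y * φ (σ t y) y) ∂ν with hNpdef
  set Nn : ℝ → ℝ≥0∞ := fun t => ∫⁻ y, ENNReal.ofReal (-(σ t y * φ (σ t y) y)) ∂ν with hNndef
  have hφσm : Measurable fun p : ℝ × (Fin m → ℝ) => φ (σ p.1 p.2) p.2 := hφmeas.comp hσpair
  have hDlm : Measurable Dl :=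
    Measurable.lintegral_prod_right' (ν := ν) (ENNReal.measurable_ofReal.comp hφσm)
  have hNpm : Measurable Np :=
    Measurable.lintegral_prod_right' (ν := ν)
      (ENNReal.measurable_ofReal.comp (hσm.mul hφσm))
  have hNnm : Measurable Nn :=
    Measurable.lintegral_prod_right' (ν := ν)
      (ENNReal.measurable_ofReal.comp ((hσm.mul hφσm).neg))
  -- indicator facts
  have hind : ∀ (S : Set ℝ), MeasurableSet S →
      Measurable (S.indicator (fun _ => (1 : ℝ≥0∞))) :=
    fun S hS => measurable_const.indicator hS
  have hσinv : ∀ t y, u1 * σ t y + c y = t := by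
    intro t y; rw [hσdef]; field_simp; ring
  -- ofReal multiplication with nonneg second factor
  have hmulpos : ∀ (a b : ℝ), 0 ≤ b →
      ENNReal.ofReal a * ENNReal.ofReal b = ENNReal.ofReal (a * b) := by
    intro a b hb
    rcases le_or_gt 0 a with ha | ha
    · rw [ENNReal.ofReal_mul ha]
    · rw [ENNReal.ofReal_of_nonpos ha.le, ENNReal.ofReal_of_nonpos (mul_nonpos_iff.2 (Or.inr ⟨ha.le, hb⟩)), zero_mul]
  -- specialized master lemma
  have master' : ∀ (ψ : ℝ → (Fin m → ℝ) → ℝ≥0∞),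
      (Measurable fun p : ℝ × (Fin m → ℝ) => ψ p.1 p.2) →
      ∫⁻ ω, ψ (X1 ω) (Y ω) ∂μ
        = cE * ∫⁻ t, ∫⁻ y, ψ (σ t y) y * ENNReal.ofReal (φ (σ t y) y) ∂ν ∂volume :=
    fun ψ hψ => Stmt7Aux3.master hX1 hY hφ hu1 u ψ hψ
  -- Application A : the law of Z
  have hmapZ : μ.map Z = volume.withDensity (fun t => cE * Dl t) := by
    ext S hS
    rw [Measure.map_apply hZm hS, withDensity_apply _ hS]
    have hψ : Measurable fun p : ℝ × (Fin m → ℝ) =>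
        S.indicator (fun _ => (1:ℝ≥0∞)) (u1 * p.1 + c p.2) :=
      (hind S hS).comp ((measurable_fst.const_mul u1).add (hc.comp measurable_snd))
    have hmaster := master' (fun s y => S.indicator (fun _ => (1:ℝ≥0∞)) (u1 * s + c y)) hψ
    simp only [hσinv] at hmaster
    have hL : ∫⁻ ω, S.indicator (fun _ => (1:ℝ≥0∞)) (u1 * X1 ω + c (Y ω)) ∂μ
        = μ (Z ⁻¹' S) := by
      have hpt : ∀ ω, S.indicator (fun _ => (1:ℝ≥0∞)) (u1 * X1 ω + c (Y ω))
          = (Z ⁻¹' S).indicator (fun _ => (1:ℝ≥0∞)) ω := by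
        intro ω
        rw [← hZc ω]
        by_cases h : Z ω ∈ S <;> simp [Set.indicator, h]
      simp_rw [hpt]
      rw [lintegral_indicator (hZm hS)]
      simp
    rw [hL] at hmaster
    rw [hmaster]
    have hinner : ∀ t, ∫⁻ y, S.indicator (fun _ => (1:ℝ≥0∞)) t
        * ENNReal.ofReal (φ (σ t y) y) ∂ν = S.indicator (fun _ => (1:ℝ≥0∞)) t * Dl t :=
      fun t => lintegral_const_mul _
        ((ENNReal.measurable_ofReal.comp hφσm).comp measurable_prodMk_left)
    simp_rw [hinner]
    have hindDl : ∀ t, S.indicator (fun _ => (1:ℝ≥0∞)) t * Dl t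
        = S.indicator (fun t => cE⁻¹ * (cE * Dl t)) t := by
      intro t
      by_cases h : t ∈ S
      · simp [Set.indicator, h, ← mul_assoc, ENNReal.inv_mul_cancel hcE0 hcEtop]
      · simp [Set.indicator, h]
    simp_rw [hindDl]
    rw [lintegral_indicator hS]
    rw [lintegral_const_mul (f := fun t => cE * Dl t) _ (measurable_const.mul hDlm)]
    rw [← mul_assoc, ENNReal.mul_inv_cancel hcE0 hcEtop, one_mul]
  -- Application B/C : positive and negative parts
  have happB : ∀ (S : Set ℝ), MeasurableSet S →
      ∫⁻ ω, ENNReal.ofReal (X1 ω) * S.indicator (fun _ => (1:ℝ≥0∞)) (Z ω) ∂μ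
        = cE * ∫⁻ t in S, Np t ∂volume := by
    intro S hS
    have hψ : Measurable fun p : ℝ × (Fin m → ℝ) =>
        ENNReal.ofReal p.1 * S.indicator (fun _ => (1:ℝ≥0∞)) (u1 * p.1 + c p.2) :=
      (ENNReal.measurable_ofReal.comp measurable_fst).mul
        ((hind S hS).comp ((measurable_fst.const_mul u1).add (hc.comp measurable_snd)))
    have hmaster := master'
      (fun s y => ENNReal.ofReal s * S.indicator (fun _ => (1:ℝ≥0∞)) (u1 * s + c y)) hψ
    simp only [hσinv] at hmaster
    have hL : (∫⁻ ω, ENNReal.ofReal (X1 ω)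
        * S.indicator (fun _ => (1:ℝ≥0∞)) (u1 * X1 ω + c (Y ω)) ∂μ)
        = ∫⁻ ω, ENNReal.ofReal (X1 ω) * S.indicator (fun _ => (1:ℝ≥0∞)) (Z ω) ∂μ := by
      refine lintegral_congr fun ω => ?_
      rw [← hZc ω]
    rw [hL] at hmaster
    rw [hmaster]
    have hre : ∀ t y, (ENNReal.ofReal (σ t y) * S.indicator (fun _ => (1:ℝ≥0∞)) t)
        * ENNReal.ofReal (φ (σ t y) y)
        = S.indicator (fun _ => (1:ℝ≥0∞)) t * ENNReal.ofReal (σ t y * φ (σ t y) y) := by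
      intro t y
      rw [mul_comm (ENNReal.ofReal (σ t y)) _, mul_assoc, hmulpos _ _ (hφpos _ _)]
    simp_rw [hre]
    have hinner : ∀ t, ∫⁻ y, S.indicator (fun _ => (1:ℝ≥0∞)) t
        * ENNReal.ofReal (σ t y * φ (σ t y) y) ∂ν
        = S.indicator (fun _ => (1:ℝ≥0∞)) t * Np t :=
      fun t => lintegral_const_mul _
        ((ENNReal.measurable_ofReal.comp (hσm.mul hφσm)).comp measurable_prodMk_left)
    simp_rw [hinner]
    congr 1
    have hindN : ∀ t, S.indicator (fun _ => (1:ℝ≥0∞)) t * Np t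
        = S.indicator (fun t => Np t) t := by
      intro t
      by_cases h : t ∈ S <;> simp [Set.indicator, h]
    simp_rw [hindN]
    rw [lintegral_indicator hS]
  have happC : ∀ (S : Set ℝ), MeasurableSet S →
      ∫⁻ ω, ENNReal.ofReal (-X1 ω) * S.indicator (fun _ => (1:ℝ≥0∞)) (Z ω) ∂μ
        = cE * ∫⁻ t in S, Nn t ∂volume := by
    intro S hS
    have hψ : Measurable fun p : ℝ × (Fin m → ℝ) =>
        ENNReal.ofReal (-p.1) * S.indicator (fun _ => (1:ℝ≥0∞)) (u1 * p.1 + c p.2) :=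
      (ENNReal.measurable_ofReal.comp measurable_fst.neg).mul
        ((hind S hS).comp ((measurable_fst.const_mul u1).add (hc.comp measurable_snd)))
    have hmaster := master'
      (fun s y => ENNReal.ofReal (-s) * S.indicator (fun _ => (1:ℝ≥0∞)) (u1 * s + c y)) hψ
    simp only [hσinv] at hmaster
    have hL : (∫⁻ ω, ENNReal.ofReal (-X1 ω)
        * S.indicator (fun _ => (1:ℝ≥0∞)) (u1 * X1 ω + c (Y ω)) ∂μ)
        = ∫⁻ ω, ENNReal.ofReal (-X1 ω) * S.indicator (fun _ => (1:ℝ≥0∞)) (Z ω) ∂μ := by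
      refine lintegral_congr fun ω => ?_
      rw [← hZc ω]
    rw [hL] at hmaster
    rw [hmaster]
    have hre : ∀ t y, (ENNReal.ofReal (-σ t y) * S.indicator (fun _ => (1:ℝ≥0∞)) t)
        * ENNReal.ofReal (φ (σ t y) y)
        = S.indicator (fun _ => (1:ℝ≥0∞)) t * ENNReal.ofReal (-(σ t y * φ (σ t y) y)) := by
      intro t y
      rw [mul_comm (ENNReal.ofReal (-σ t y)) _, mul_assoc, hmulpos _ _ (hφpos _ _), neg_mul]
    simp_rw [hre]
    have hinner : ∀ t, ∫⁻ y, S.indicator (fun _ => (1:ℝ≥0∞)) t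
        * ENNReal.ofReal (-(σ t y * φ (σ t y) y)) ∂ν
        = S.indicator (fun _ => (1:ℝ≥0∞)) t * Nn t :=
      fun t => lintegral_const_mul _
        ((ENNReal.measurable_ofReal.comp (hσm.mul hφσm).neg).comp measurable_prodMk_left)
    simp_rw [hinner]
    congr 1
    have hindN : ∀ t, S.indicator (fun _ => (1:ℝ≥0∞)) t * Nn t
        = S.indicator (fun t => Nn t) t := by
      intro t
      by_cases h : t ∈ S <;> simp [Set.indicator, h]
    simp_rw [hindN]
    rw [lintegral_indicator hS]
  -- global finiteness
  have hDltop : ∫⁻ t, Dl t ∂volume ≠ ⊤ := by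
    intro htop
    have h1 : (μ.map Z) Set.univ = 1 := by
      have : IsProbabilityMeasure (μ.map Z) := Measure.isProbabilityMeasure_map hZm.aemeasurable
      exact measure_univ
    rw [hmapZ, withDensity_apply _ MeasurableSet.univ, Measure.restrict_univ,
      lintegral_const_mul _ hDlm, htop, ENNReal.mul_top hcE0] at h1
    exact ENNReal.one_ne_top h1.symm
  have hX1top : ∫⁻ ω, (‖X1 ω‖₊ : ℝ≥0∞) ∂μ ≠ ⊤ := hX1int.2.ne
  have hNptop : ∫⁻ t, Np t ∂volume ≠ ⊤ := by
    intro htop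
    have h1 := happB Set.univ MeasurableSet.univ
    rw [Measure.restrict_univ, htop, ENNReal.mul_top hcE0] at h1
    simp only [Set.indicator_univ, mul_one] at h1
    have h2 : ∫⁻ ω, ENNReal.ofReal (X1 ω) ∂μ ≤ ∫⁻ ω, (‖X1 ω‖₊ : ℝ≥0∞) ∂μ := by
      refine lintegral_mono fun ω => ?_
      rw [← enorm_eq_nnnorm, Real.enorm_eq_ofReal_abs]
      exact ENNReal.ofReal_le_ofReal (le_abs_self _)
    rw [h1] at h2
    exact hX1top (top_le_iff.mp h2)
  have hNntop : ∫⁻ t, Nn t ∂volume ≠ ⊤ := by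
    intro htop
    have h1 := happC Set.univ MeasurableSet.univ
    rw [Measure.restrict_univ, htop, ENNReal.mul_top hcE0] at h1
    simp only [Set.indicator_univ, mul_one] at h1
    have h2 : ∫⁻ ω, ENNReal.ofReal (-X1 ω) ∂μ ≤ ∫⁻ ω, (‖X1 ω‖₊ : ℝ≥0∞) ∂μ := by
      refine lintegral_mono fun ω => ?_
      rw [← enorm_eq_nnnorm, Real.enorm_eq_ofReal_abs]
      exact ENNReal.ofReal_le_ofReal (neg_le_abs _)
    rw [h1] at h2
    exact hX1top (top_le_iff.mp h2)
  have hDfin : ∀ᵐ t ∂(volume : Measure ℝ), Dl t < ⊤ := ae_lt_top hDlm hDltop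
  have hNpfin : ∀ᵐ t ∂(volume : Measure ℝ), Np t < ⊤ := ae_lt_top hNpm hNptop
  have hNnfin : ∀ᵐ t ∂(volume : Measure ℝ), Nn t < ⊤ := ae_lt_top hNnm hNntop
  -- real-valued versions
  set Dre : ℝ → ℝ := fun t => ∫ y, φ (σ t y) y ∂ν with hDredef
  set Nre : ℝ → ℝ := fun t => ∫ y, σ t y * φ (σ t y) y ∂ν with hNredef
  -- a.e. identification of real versions
  have hofReal_abs : ∀ x : ℝ, ENNReal.ofReal |x| = ENNReal.ofReal x + ENNReal.ofReal (-x) := by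
    intro x
    rcases le_or_gt 0 x with h | h
    · rw [abs_of_nonneg h, ENNReal.ofReal_of_nonpos (neg_nonpos.mpr h), add_zero]
    · rw [abs_of_neg h, ENNReal.ofReal_of_nonpos h.le, zero_add]
  have hDre_ae : ∀ t, Dl t ≠ ⊤ → Dre t = (Dl t).toReal ∧ ENNReal.ofReal (Dre t) = Dl t := by
    intro t ht
    have hslice : Measurable fun y => φ (σ t y) y := hφσm.comp measurable_prodMk_left
    have hint : Integrable (fun y => φ (σ t y) y) ν := by
      refine ⟨hslice.aestronglyMeasurable, ?_⟩
      have hpt : ∀ y, (‖φ (σ t y) y‖₊ : ℝ≥0∞) = ENNReal.ofReal (φ (σ t y) y) :=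
        fun y => Real.enorm_eq_ofReal (hφpos _ _)
      refine lt_of_le_of_lt (le_of_eq (lintegral_congr fun y => hpt y)) ?_
      exact lt_top_iff_ne_top.mpr ht
    have hofReal := ofReal_integral_eq_lintegral_ofReal hint
      (Filter.Eventually.of_forall fun y => hφpos _ _)
    constructor
    · show (∫ y, φ (σ t y) y ∂ν) = (Dl t).toReal
      have hDlt : Dl t = ∫⁻ x, ENNReal.ofReal (φ (σ t x) x) ∂ν := rfl
      rw [hDlt, ← hofReal, ENNReal.toReal_ofReal (integral_nonneg fun y => hφpos _ _)]
    · exact hofReal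
  have hNre_ae : ∀ t, Np t ≠ ⊤ → Nn t ≠ ⊤ → Nre t = (Np t).toReal - (Nn t).toReal := by
    intro t htp htn
    have hslice : Measurable fun y => σ t y * φ (σ t y) y :=
      (hσm.mul hφσm).comp measurable_prodMk_left
    have hint : Integrable (fun y => σ t y * φ (σ t y) y) ν := by
      refine ⟨hslice.aestronglyMeasurable, ?_⟩
      have hpt : ∀ y, (‖σ t y * φ (σ t y) y‖₊ : ℝ≥0∞)
          = ENNReal.ofReal (σ t y * φ (σ t y) y) + ENNReal.ofReal (-(σ t y * φ (σ t y) y)) := by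
        intro y
        rw [← enorm_eq_nnnorm, Real.enorm_eq_ofReal_abs, hofReal_abs]
      calc ∫⁻ y, (‖σ t y * φ (σ t y) y‖₊ : ℝ≥0∞) ∂ν
          = ∫⁻ y, (ENNReal.ofReal (σ t y * φ (σ t y) y)
              + ENNReal.ofReal (-(σ t y * φ (σ t y) y))) ∂ν := lintegral_congr fun y => hpt y
        _ = Np t + Nn t := lintegral_add_left
              ((ENNReal.measurable_ofReal.comp (hσm.mul hφσm)).comp measurable_prodMk_left) _
        _ < ⊤ := ENNReal.add_lt_top.mpr ⟨lt_top_iff_ne_top.mpr htp, lt_top_iff_ne_top.mpr htn⟩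
    show (∫ y, σ t y * φ (σ t y) y ∂ν) = (Np t).toReal - (Nn t).toReal
    exact integral_eq_lintegral_pos_part_sub_lintegral_neg_part hint
  -- integrability of comparison functions
  set G1 : ℝ → ℝ := fun t => g t * (Dl t).toReal with hG1def
  set G2 : ℝ → ℝ := fun t => (Np t).toReal - (Nn t).toReal with hG2def
  have hG2int : Integrable G2 volume := by
    exact (integrable_toReal_of_lintegral_ne_top hNpm.aemeasurable hNptop).sub
      (integrable_toReal_of_lintegral_ne_top hNnm.aemeasurable hNntop)
  -- NNReal density
  set dens : ℝ → ℝ≥0 := fun t => (cE * Dl t).toNNReal with hdensdef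
  have hdensm : Measurable dens := (measurable_const.mul hDlm).ennreal_toNNReal
  have hwd : volume.withDensity (fun t => cE * Dl t)
      = volume.withDensity (fun t => (dens t : ℝ≥0∞)) := by
    refine withDensity_congr_ae ?_
    filter_upwards [hDfin] with t ht
    rw [hdensdef]
    rw [ENNReal.coe_toNNReal (by exact ENNReal.mul_ne_top hcEtop ht.ne)]
  have hdens_re : ∀ t, (dens t : ℝ) = |u1|⁻¹ * (Dl t).toReal := by
    intro t
    rw [hdensdef]
    rw [ENNReal.coe_toNNReal_eq_toReal, ENNReal.toReal_mul, hcEre]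
  have hgZint : Integrable (fun ω => g (Z ω)) μ := integrable_condExp.congr hfact.symm
  have hgmapZ : Integrable g (μ.map Z) :=
    (integrable_map_measure hg.aestronglyMeasurable hZm.aemeasurable).mpr hgZint
  have hG1int : Integrable G1 volume := by
    have h2 : Integrable (fun t => dens t • g t) volume := by
      rw [← integrable_withDensity_iff_integrable_smul hdensm, ← hwd, ← hmapZ]
      exact hgmapZ
    refine (h2.const_mul |u1|).congr (Filter.Eventually.of_forall fun t => ?_)
    simp only [hG1def, NNReal.smul_def, smul_eq_mul, hdens_re t]
    rw [← mul_assoc, ← mul_assoc, mul_inv_cancel₀ (abs_ne_zero.2 hu1), one_mul, mul_comm]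
  -- measurable-space inequality for condexp
  have hble : MeasurableSpace.comap Z (borel ℝ) ≤ (by infer_instance : MeasurableSpace Ω) := by
    rw [← BorelSpace.measurable_eq (α := ℝ)]
    exact hZm.comap_le
  have : IsFiniteMeasure (μ.trim hble) := isFiniteMeasure_trim hble
  -- the set-integral equality
  have hsetint : ∀ S : Set ℝ, MeasurableSet S → (volume S < ⊤) →
      ∫ t in S, G1 t ∂volume = ∫ t in S, G2 t ∂volume := by
    intro S hS _
    have habs0 : (|u1|⁻¹ : ℝ) ≠ 0 := inv_ne_zero (abs_ne_zero.2 hu1)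
    apply mul_left_cancel₀ habs0
    have hZS : MeasurableSet (Z ⁻¹' S) := hZm hS
    have e1 : ∫ t in S, g t ∂(μ.map Z) = |u1|⁻¹ * ∫ t in S, G1 t ∂volume := by
      rw [hmapZ, hwd, restrict_withDensity hS, integral_withDensity_eq_integral_smul hdensm]
      rw [← integral_const_mul]
      refine setIntegral_congr_ae hS (Filter.Eventually.of_forall fun t _ => ?_)
      simp only [hG1def, NNReal.smul_def, smul_eq_mul, hdens_re t]
      ring
    have e2 : ∫ t in S, g t ∂(μ.map Z) = ∫ ω in Z ⁻¹' S, g (Z ω) ∂μ :=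
      setIntegral_map hS hg.aestronglyMeasurable hZm.aemeasurable
    have e3 : ∫ ω in Z ⁻¹' S, g (Z ω) ∂μ = ∫ ω in Z ⁻¹' S, X1 ω ∂μ := by
      rw [setIntegral_congr_ae hZS (hfact.mono fun ω h _ => h)]
      have hSm' : MeasurableSet[MeasurableSpace.comap Z (borel ℝ)] (Z ⁻¹' S) := by
        refine ⟨S, ?_, rfl⟩
        have : (borel ℝ) = (by infer_instance : MeasurableSpace ℝ) :=
          (BorelSpace.measurable_eq (α := ℝ)).symm
        rw [this]
        exact hS
      exact setIntegral_condExp hble hX1int hSm'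
    have e4p : ∫⁻ ω in Z ⁻¹' S, ENNReal.ofReal (X1 ω) ∂μ = cE * ∫⁻ t in S, Np t ∂volume := by
      rw [← happB S hS, ← lintegral_indicator hZS]
      refine lintegral_congr fun ω => ?_
      by_cases h : Z ω ∈ S <;> simp [Set.indicator, h]
    have e4n : ∫⁻ ω in Z ⁻¹' S, ENNReal.ofReal (-X1 ω) ∂μ = cE * ∫⁻ t in S, Nn t ∂volume := by
      rw [← happC S hS, ← lintegral_indicator hZS]
      refine lintegral_congr fun ω => ?_
      by_cases h : Z ω ∈ S <;> simp [Set.indicator, h]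
    have e5 : ∫ ω in Z ⁻¹' S, X1 ω ∂μ
        = |u1|⁻¹ * ((∫⁻ t in S, Np t ∂volume).toReal - (∫⁻ t in S, Nn t ∂volume).toReal) := by
      rw [integral_eq_lintegral_pos_part_sub_lintegral_neg_part hX1int.restrict]
      rw [e4p, e4n, ENNReal.toReal_mul, ENNReal.toReal_mul, hcEre]
      ring
    have hNpS : ∫⁻ t in S, Np t ∂volume ≠ ⊤ :=
      ne_top_of_le_ne_top hNptop (setLIntegral_le_lintegral _ _)
    have hNnS : ∫⁻ t in S, Nn t ∂volume ≠ ⊤ :=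
      ne_top_of_le_ne_top hNntop (setLIntegral_le_lintegral _ _)
    have e6 : ∫ t in S, G2 t ∂volume
        = (∫⁻ t in S, Np t ∂volume).toReal - (∫⁻ t in S, Nn t ∂volume).toReal := by
      rw [hG2def]
      rw [integral_sub
        (integrable_toReal_of_lintegral_ne_top hNpm.aemeasurable hNptop).integrableOn
        (integrable_toReal_of_lintegral_ne_top hNnm.aemeasurable hNntop).integrableOn]
      rw [integral_toReal (hNpm.aemeasurable.restrict) (ae_restrict_of_ae hNpfin),
        integral_toReal (hNnm.aemeasurable.restrict) (ae_restrict_of_ae hNnfin)]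
    rw [← e1, e2, e3, e5, e6]
  have hae : G1 =ᵐ[volume] G2 :=
    ae_eq_of_forall_setIntegral_eq_of_sigmaFinite
      (fun s _ _ => hG1int.integrableOn) (fun s _ _ => hG2int.integrableOn) hsetint
  -- final assembly
  have target' : ∀ᵐ t ∂(μ.map Z), g t = Nre t / Dre t := by
    rw [hmapZ, ae_withDensity_iff (f := fun t => cE * Dl t) (measurable_const.mul hDlm)]
    filter_upwards [hae, hDfin, hNpfin, hNnfin] with t h1 h2 h3 h4 hne
    have hDl0 : Dl t ≠ 0 := by
      intro h0
      rw [h0, mul_zero] at hne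
      exact hne rfl
    obtain ⟨hDre, -⟩ := hDre_ae t h2.ne
    have hNre := hNre_ae t h3.ne h4.ne
    have hDne : Dre t ≠ 0 := by
      rw [hDre]
      exact ENNReal.toReal_ne_zero.mpr ⟨hDl0, h2.ne⟩
    have hDtR : (Dl t).toReal ≠ 0 := ENNReal.toReal_ne_zero.mpr ⟨hDl0, h2.ne⟩
    rw [hNre, hDre]
    simp only [hG1def, hG2def] at h1
    rw [← h1, mul_div_assoc, div_self hDtR, mul_one]
  refine target'.mono fun t ht => ?_
  have e1 : (∫ ω, (u1⁻¹ * (t - ∑ j, u j * Y ω j))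
      * φ (u1⁻¹ * (t - ∑ j, u j * Y ω j)) (Y ω) ∂μ) = Nre t := by
    rw [hNredef]
    exact (integral_map hY.aemeasurable
      ((hσm.mul hφσm).comp (measurable_prodMk_left : Measurable fun y : Fin m → ℝ => (t, y))).aestronglyMeasurable).symm
  have e2 : (∫ ω, φ (u1⁻¹ * (t - ∑ j, u j * Y ω j)) (Y ω) ∂μ) = Dre t := by
    rw [hDredef]
    exact (integral_map hY.aemeasurable
      (hφσm.comp (measurable_prodMk_left : Measurable fun y : Fin m → ℝ => (t, y))).aestronglyMeasurable).symm
  rw [e1, e2]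
  exact ht
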